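/- If A ⊂ K^m is a μ^m measurable set and 1 ≤ k ≤ m, then for μ^m-almost all y ∈ A the set {x ∈ K^k : (x₁,…,x_k, y_{k+1},…,y_m) ∉ A} has μ^k density 0 at the point (y₁,…,y_k). -/

import Mathlib

open MeasureTheory Metric Set Filter Topology Pointwise
open scoped ENNReal NNReal

set_option linter.unusedSectionVars false
set_option linter.unusedVariables false
set_option maxHeartbeats 1000000

/-- A set `S` has `ν` density `0` (in dimension `d`) at a point `z`, where the
radii run through the value group `Γ_K = {‖x‖ : x ∈ K, x ≠ 0}`. -/
def densityZeroAt (K : Type*) [NontriviallyNormedField K] {E : Type*}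
    [SeminormedAddCommGroup E] [MeasurableSpace E] (ν : Measure E) (d : ℕ)
    (S : Set E) (z : E) : Prop :=
  Filter.Tendsto (fun R : ℝ => ν (S ∩ Metric.closedBall z R) / ENNReal.ofReal (R ^ d))
    (𝓝[{R : ℝ | ∃ x : K, x ≠ 0 ∧ ‖x‖ = R}] 0) (𝓝 0)

section Aux
variable {K : Type*} [NontriviallyNormedField K] [MeasurableSpace K] [BorelSpace K]
  (μ : Measure K) [μ.IsAddHaarMeasure]

lemma aux_ball_eq_smul {a : K} (ha : a ≠ 0) :
    closedBall (0 : K) ‖a‖ = a • closedBall (0 : K) 1 := by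
  ext u
  simp only [mem_closedBall, dist_zero_right, Set.mem_smul_set_iff_inv_smul_mem₀ ha,
    smul_eq_mul, norm_mul, norm_inv]
  rw [inv_mul_le_iff₀ (norm_pos_iff.mpr ha), mul_one]

lemma aux_measure_closedBall (hμ1 : μ (closedBall (0 : K) 1) = 1)
    (hμs : ∀ (a : K) (A : Set K), μ (a • A) = (‖a‖₊ : ENNReal) * μ A)
    {a : K} (ha : a ≠ 0) (x : K) :
    μ (closedBall x ‖a‖) = (‖a‖₊ : ℝ≥0∞) := by
  have h1 : (fun y => x + y) ⁻¹' closedBall x ‖a‖ = closedBall (0 : K) ‖a‖ := by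
    ext u; simp [mem_closedBall, dist_eq_norm]
  calc μ (closedBall x ‖a‖) = μ ((fun y => x + y) ⁻¹' closedBall x ‖a‖) :=
        (measure_preimage_add μ x _).symm
    _ = μ (a • closedBall (0 : K) 1) := by rw [h1, aux_ball_eq_smul ha]
    _ = ‖a‖₊ * 1 := by rw [hμs, hμ1]
    _ = ‖a‖₊ := mul_one _

lemma aux_pi_ball (hμ1 : μ (closedBall (0 : K) 1) = 1)
    (hμs : ∀ (a : K) (A : Set K), μ (a • A) = (‖a‖₊ : ENNReal) * μ A)
    [SigmaFinite μ] {k : ℕ} {a : K} (ha : a ≠ 0) (x : Fin k → K) :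
    (Measure.pi fun _ : Fin k => μ) (closedBall x ‖a‖) = (‖a‖₊ : ℝ≥0∞) ^ k := by
  rw [closedBall_pi x (norm_nonneg a), Measure.pi_pi]
  simp [aux_measure_closedBall μ hμ1 hμs ha]


lemma aux_doubling (hμ1 : μ (closedBall (0 : K) 1) = 1)
    (hμs : ∀ (a : K) (A : Set K), μ (a • A) = (‖a‖₊ : ENNReal) * μ A)
    [SigmaFinite μ] (k : ℕ) :
    IsUnifLocDoublingMeasure (Measure.pi fun _ : Fin k => μ) := by
  obtain ⟨c₀, hc₀⟩ := NormedField.exists_one_lt_norm K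
  obtain ⟨j, hj⟩ := pow_unbounded_of_one_lt (2 : ℝ) hc₀
  set c : K := c₀ ^ j with hc_def
  have hc2 : (2 : ℝ) < ‖c‖ := by rwa [hc_def, norm_pow]
  have hc1 : (1 : ℝ) < ‖c‖ := by linarith
  have hcne : c ≠ 0 := by
    intro h; rw [h, norm_zero] at hc2; linarith
  have hx0 : ‖c‖₊ ≠ 0 := nnnorm_ne_zero_iff.mpr hcne
  refine ⟨⟨(‖c‖₊ ^ 2) ^ k, ?_⟩⟩
  filter_upwards [self_mem_nhdsWithin] with ε (hε : ε ∈ Ioi (0 : ℝ))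
  intro x
  obtain ⟨n, hn1, hn2⟩ := exists_mem_Ico_zpow (mem_Ioi.mp hε) hc1
  have hle : 2 * ε ≤ ‖c ^ (n + 2)‖ := by
    rw [norm_zpow]
    have h1 : ‖c‖ ^ (n + 2) = ‖c‖ ^ (n + 1) * ‖c‖ := by
      rw [← zpow_add_one₀ (by positivity : ‖c‖ ≠ 0)]; ring_nf
    have h2 : (0 : ℝ) < ‖c‖ ^ (n + 1) := zpow_pos (by linarith) _
    nlinarith [hn2]
  have h2 : ‖c ^ n‖ ≤ ε := by rw [norm_zpow]; exact hn1
  have hnn : ‖c ^ ((n : ℤ) + 2)‖₊ ^ k = (‖c‖₊ ^ 2) ^ k * ‖c ^ n‖₊ ^ k := by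
    rw [nnnorm_zpow, nnnorm_zpow, ← mul_pow]
    congr 1
    rw [show (n : ℤ) + 2 = 2 + n by ring, zpow_add₀ hx0, zpow_two, sq]
  calc (Measure.pi fun _ : Fin k => μ) (closedBall x (2 * ε))
      ≤ (Measure.pi fun _ : Fin k => μ) (closedBall x ‖c ^ ((n : ℤ) + 2)‖) :=
        measure_mono (closedBall_subset_closedBall hle)
    _ = (‖c ^ ((n : ℤ) + 2)‖₊ : ℝ≥0∞) ^ k :=
        aux_pi_ball μ hμ1 hμs (zpow_ne_zero _ hcne) x
    _ = ((‖c‖₊ ^ 2) ^ k : ℝ≥0) * (‖c ^ n‖₊ : ℝ≥0∞) ^ k := by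
        rw [← ENNReal.coe_pow, hnn]; push_cast; ring
    _ = ((‖c‖₊ ^ 2) ^ k : ℝ≥0) * (Measure.pi fun _ : Fin k => μ) (closedBall x ‖c ^ n‖) := by
        rw [aux_pi_ball μ hμ1 hμs (zpow_ne_zero _ hcne) x]
    _ ≤ ((‖c‖₊ ^ 2) ^ k : ℝ≥0) * (Measure.pi fun _ : Fin k => μ) (closedBall x ε) := by
        exact mul_le_mul_right (measure_mono (closedBall_subset_closedBall h2)) _


lemma aux_ball_volume (hμ1 : μ (closedBall (0 : K) 1) = 1)
    (hμs : ∀ (a : K) (A : Set K), μ (a • A) = (‖a‖₊ : ENNReal) * μ A)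
    [SigmaFinite μ] {k : ℕ} {b : K} (hb0 : b ≠ 0) (x : Fin k → K) (n : ℕ) :
    (Measure.pi fun _ : Fin k => μ) (closedBall x (‖b‖ ^ n)) =
      ENNReal.ofReal ((‖b‖ ^ n) ^ k) := by
  rw [show ‖b‖ ^ n = ‖b ^ n‖ by rw [norm_pow],
    aux_pi_ball μ hμ1 hμs (pow_ne_zero _ hb0) x,
    ENNReal.ofReal_pow (norm_nonneg _), ofReal_norm, enorm_eq_nnnorm]

lemma aux_core [LocallyCompactSpace K] (hμ1 : μ (closedBall (0 : K) 1) = 1)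
    (hμs : ∀ (a : K) (A : Set K), μ (a • A) = (‖a‖₊ : ENNReal) * μ A)
    [SigmaFinite μ] {k : ℕ} {b : K} (hb0 : b ≠ 0) (hb1 : ‖b‖ < 1)
    {Az : Set (Fin k → K)} (hAz : MeasurableSet Az) :
    ∀ᵐ x ∂(Measure.pi fun _ : Fin k => μ), x ∈ Az →
      Tendsto (fun n : ℕ => (Measure.pi fun _ : Fin k => μ) (Azᶜ ∩ closedBall x (‖b‖ ^ n)) /
        ENNReal.ofReal ((‖b‖ ^ n) ^ k)) atTop (𝓝 0) := by
  haveI : ProperSpace K := .of_nontriviallyNormedField_of_weaklyLocallyCompactSpace K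
  set ν := Measure.pi fun _ : Fin k => μ with hν
  haveI : IsUnifLocDoublingMeasure ν := aux_doubling μ hμ1 hμs k
  haveI : IsLocallyFiniteMeasure ν := by
    constructor; intro x
    refine ⟨closedBall x ‖(1 : K)‖, closedBall_mem_nhds _ (by norm_num), ?_⟩
    rw [aux_pi_ball μ hμ1 hμs one_ne_zero x]
    simp
  have hb : (0 : ℝ) < ‖b‖ := norm_pos_iff.mpr hb0
  have hδ := IsUnifLocDoublingMeasure.ae_tendsto_measure_inter_div ν Az 1
  rw [ae_restrict_iff' hAz] at hδ
  filter_upwards [hδ] with x hx hxA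
  have htend : Tendsto (fun n : ℕ => ‖b‖ ^ n) atTop (𝓝[>] (0 : ℝ)) :=
    tendsto_nhdsWithin_iff.mpr ⟨tendsto_pow_atTop_nhds_zero_of_lt_one hb.le hb1,
      Eventually.of_forall fun n => pow_pos hb n⟩
  have hx' := hx hxA (fun _ : ℕ => x) (fun n => ‖b‖ ^ n) htend
    (Eventually.of_forall fun n => by
      simpa using mem_closedBall_self (by positivity : (0:ℝ) ≤ 1 * ‖b‖ ^ n))
  have key : ∀ n : ℕ, ν (Azᶜ ∩ closedBall x (‖b‖ ^ n)) / ν (closedBall x (‖b‖ ^ n))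
      = 1 - ν (Az ∩ closedBall x (‖b‖ ^ n)) / ν (closedBall x (‖b‖ ^ n)) := by
    intro n
    set B := closedBall x (‖b‖ ^ n) with hB
    have hfin : ν B ≠ ∞ := by
      rw [hB, aux_ball_volume μ hμ1 hμs hb0]; exact ENNReal.ofReal_ne_top
    have hpos : ν B ≠ 0 := by
      rw [hB, aux_ball_volume μ hμ1 hμs hb0]
      exact (ENNReal.ofReal_pos.mpr (by positivity)).ne'
    have hsum : ν (Az ∩ B) + ν (Azᶜ ∩ B) = ν B := by
      rw [inter_comm Az B, inter_comm Azᶜ B, ← diff_eq]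
      exact measure_inter_add_diff B hAz
    have h1 : ν (Azᶜ ∩ B) / ν B + ν (Az ∩ B) / ν B = 1 := by
      rw [ENNReal.div_add_div_same, add_comm, hsum, ENNReal.div_self hpos hfin]
    exact ENNReal.eq_sub_of_add_eq
      (ENNReal.div_lt_top (ne_top_of_le_ne_top hfin (measure_mono inter_subset_right)) hpos).ne h1
  have h2 : Tendsto (fun n : ℕ =>
      1 - ν (Az ∩ closedBall x (‖b‖ ^ n)) / ν (closedBall x (‖b‖ ^ n))) atTop (𝓝 (1 - 1)) :=
    ((ENNReal.continuous_sub_left ENNReal.one_ne_top).continuousAt).tendsto.comp hx'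
  have h3 : Tendsto (fun n : ℕ =>
      ν (Azᶜ ∩ closedBall x (‖b‖ ^ n)) / ν (closedBall x (‖b‖ ^ n))) atTop (𝓝 0) := by
    simpa [key] using h2
  have heq : (fun n : ℕ => ν (Azᶜ ∩ closedBall x (‖b‖ ^ n)) / ENNReal.ofReal ((‖b‖ ^ n) ^ k))
      = fun n : ℕ => ν (Azᶜ ∩ closedBall x (‖b‖ ^ n)) / ν (closedBall x (‖b‖ ^ n)) := by
    funext n; rw [aux_ball_volume μ hμ1 hμs hb0]
  rw [heq]
  exact h3


lemma aux_nullslice [SigmaFinite μ] {m k : ℕ} (hkm : k ≤ m)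
    (D : Set (Fin m → K)) (hDm : MeasurableSet D)
    (hD0 : (Measure.pi fun _ : Fin m => μ) D = 0) :
    ∀ᵐ y ∂(Measure.pi fun _ : Fin m => μ),
      (Measure.pi fun _ : Fin k => μ)
        {u : Fin k → K |
          (fun i : Fin m => if h : (i : ℕ) < k then u ⟨(i : ℕ), h⟩ else y i) ∈ D} = 0 := by
  classical
  set p : Fin m → Prop := fun i => k ≤ (i : ℕ) with hpdef
  set E := MeasurableEquiv.piEquivPiSubtypeProd (fun _ : Fin m => K) p with hEdef
  have mpE := measurePreserving_piEquivPiSubtypeProd (fun _ : Fin m => μ) p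
  set ι : Fin k ≃ {i : Fin m // ¬ p i} :=
    { toFun := fun j => ⟨Fin.castLE hkm j, not_le.mpr j.isLt⟩
      invFun := fun i => ⟨(i.1 : ℕ), not_le.mp i.2⟩
      left_inv := fun j => by apply Fin.ext; rfl
      right_inv := fun i => by apply Subtype.ext; apply Fin.ext; rfl } with hιdef
  set G := MeasurableEquiv.piCongrLeft (fun _ : {i : Fin m // ¬ p i} => K) ι with hGdef
  have mpG := measurePreserving_piCongrLeft (fun _ : {i : Fin m // ¬ p i} => μ) ι
  set s : Set ((Subtype p → K) × ({i : Fin m // ¬ p i} → K)) := E.symm ⁻¹' D with hsdef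
  have hsm : MeasurableSet s := E.symm.measurable hDm
  have hprod0 : ((Measure.pi fun _ : Subtype p => μ).prod
      (Measure.pi fun _ : {i : Fin m // ¬ p i} => μ)) s = 0 := by
    have hED : E ⁻¹' s = D := by ext y; simp [hsdef]
    rw [← mpE.measure_preimage hsm.nullMeasurableSet, hED]
    exact hD0
  have hae := (Measure.measure_prod_null hsm).mp hprod0
  set Nz : Set (Subtype p → K) :=
    {z | (Measure.pi fun _ : {i : Fin m // ¬ p i} => μ) (Prod.mk z ⁻¹' s) ≠ 0} with hNzdef
  have hNz0 : (Measure.pi fun _ : Subtype p => μ) Nz = 0 := by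
    have := ae_iff.mp hae
    simpa [hNzdef] using this
  set N₂ := toMeasurable (Measure.pi fun _ : Subtype p => μ) Nz with hN₂def
  have hbig : (Measure.pi fun _ : Fin m => μ)
      (E ⁻¹' (N₂ ×ˢ (univ : Set ({i : Fin m // ¬ p i} → K)))) = 0 := by
    rw [mpE.measure_preimage
      (((measurableSet_toMeasurable _ _).prod MeasurableSet.univ).nullMeasurableSet),
      Measure.prod_prod, measure_toMeasurable, hNz0, zero_mul]
  filter_upwards [measure_eq_zero_iff_ae_notMem.mp hbig] with y hy
  have hz : (fun i : Subtype p => y (i : Fin m)) ∉ Nz := fun hmem =>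
    hy ⟨subset_toMeasurable _ _ hmem, trivial⟩
  have hval : (Measure.pi fun _ : {i : Fin m // ¬ p i} => μ)
      (Prod.mk (fun i : Subtype p => y (i : Fin m)) ⁻¹' s) = 0 := by
    by_contra h; exact hz h
  have hset : {u : Fin k → K |
        (fun i : Fin m => if h : (i : ℕ) < k then u ⟨(i : ℕ), h⟩ else y i) ∈ D}
      = G ⁻¹' (Prod.mk (fun i : Subtype p => y (i : Fin m)) ⁻¹' s) := by
    ext u
    have heq : E.symm ((fun i : Subtype p => y (i : Fin m)), G u)
        = (fun i : Fin m => if h : (i : ℕ) < k then u ⟨(i : ℕ), h⟩ else y i) := by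
      funext i
      have hEsymm : (E.symm ((fun i : Subtype p => y (i : Fin m)), G u)) i
          = if h : p i then y i else G u ⟨i, h⟩ := rfl
      rw [hEsymm]
      by_cases h : (i : ℕ) < k
      · rw [dif_neg (by exact not_le.mpr h : ¬ p i), dif_pos h]
        have hcoe : (⟨i, not_le.mpr h⟩ : {i : Fin m // ¬ p i}) = ι ⟨(i : ℕ), h⟩ := by
          apply Subtype.ext; apply Fin.ext; rfl
        rw [hcoe, hGdef, MeasurableEquiv.piCongrLeft_apply_apply]
      · rw [dif_pos (not_lt.mp h : p i), dif_neg h]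
    simp only [mem_preimage, mem_setOf_eq, hsdef, heq]
  rw [hset, mpG.measure_preimage (measurable_prodMk_left hsm).nullMeasurableSet]
  exact hval


lemma aux_fubini [LocallyCompactSpace K] (hμ1 : μ (closedBall (0 : K) 1) = 1)
    (hμs : ∀ (a : K) (A : Set K), μ (a • A) = (‖a‖₊ : ENNReal) * μ A)
    [SigmaFinite μ] {m k : ℕ} (hkm : k ≤ m) (A : Set (Fin m → K)) (hA : MeasurableSet A)
    {b : K} (hb0 : b ≠ 0) (hb1 : ‖b‖ < 1) :
    ∀ᵐ y ∂(Measure.pi fun _ : Fin m => μ), y ∈ A →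
      Tendsto (fun n : ℕ =>
        (Measure.pi fun _ : Fin k => μ)
          ({x : Fin k → K |
              (fun i : Fin m => if h : (i : ℕ) < k then x ⟨(i : ℕ), h⟩ else y i) ∉ A}
            ∩ closedBall (fun j : Fin k => y (Fin.castLE hkm j)) (‖b‖ ^ n)) /
          ENNReal.ofReal ((‖b‖ ^ n) ^ k)) atTop (𝓝 0) := by
  classical
  haveI : ProperSpace K := .of_nontriviallyNormedField_of_weaklyLocallyCompactSpace K
  set ν := Measure.pi fun _ : Fin k => μ with hνdef
  set μm := Measure.pi fun _ : Fin m => μ with hμmdef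
  set F : (Fin k → K) → (Fin m → K) → (Fin m → K) :=
    fun x y => fun i : Fin m => if h : (i : ℕ) < k then x ⟨(i : ℕ), h⟩ else y i with hFdef
  set pt : (Fin m → K) → (Fin k → K) := fun y => fun j : Fin k => y (Fin.castLE hkm j) with hptdef
  set g : ℕ → (Fin m → K) → ℝ≥0∞ := fun n y =>
    ν ({x | F x y ∉ A} ∩ closedBall (pt y) (‖b‖ ^ n)) / ENNReal.ofReal ((‖b‖ ^ n) ^ k) with hgdef
  set bad : Set (Fin m → K) := {y | y ∈ A ∧ limsup (fun n => g n y) atTop ≠ 0} with hbaddef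
  -- measurability of `bad`
  have hFmeas : Measurable fun q : (Fin m → K) × (Fin k → K) => F q.2 q.1 := by
    apply measurable_pi_lambda
    intro i
    by_cases h : (i : ℕ) < k
    · simp only [hFdef, dif_pos h]
      exact (measurable_pi_apply _).comp measurable_snd
    · simp only [hFdef, dif_neg h]
      exact (measurable_pi_apply i).comp measurable_fst
  have hptc : Continuous pt := continuous_pi fun j => continuous_apply _
  have hgm : ∀ n : ℕ, Measurable (g n) := by
    intro n
    have hT : MeasurableSet {q : (Fin m → K) × (Fin k → K) |
        F q.2 q.1 ∉ A ∧ q.2 ∈ closedBall (pt q.1) (‖b‖ ^ n)} := by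
      refine MeasurableSet.inter (hFmeas hA.compl) ?_
      have : IsClosed {q : (Fin m → K) × (Fin k → K) | dist q.2 (pt q.1) ≤ ‖b‖ ^ n} :=
        isClosed_le (continuous_snd.dist (hptc.comp continuous_fst)) continuous_const
      exact this.measurableSet
    have := measurable_measure_prodMk_left (ν := ν) hT
    have heq : (fun y => ν (Prod.mk y ⁻¹' {q : (Fin m → K) × (Fin k → K) |
        F q.2 q.1 ∉ A ∧ q.2 ∈ closedBall (pt q.1) (‖b‖ ^ n)}))
        = fun y => ν ({x | F x y ∉ A} ∩ closedBall (pt y) (‖b‖ ^ n)) := by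
      funext y; rfl
    rw [heq] at this
    exact this.div_const _
  have hbadm : MeasurableSet bad := by
    have hlm : Measurable fun y => limsup (fun n => g n y) atTop := Measurable.limsup hgm
    exact hA.inter (hlm (measurableSet_singleton 0)).compl
  -- reduce to showing `μm bad = 0`
  suffices hnull : μm bad = 0 by
    have h1 : ∀ᵐ y ∂μm, y ∉ bad := by
      rw [ae_iff]; simpa using hnull
    filter_upwards [h1] with y hy hyA
    have hlim : limsup (fun n => g n y) atTop = 0 := by
      by_contra h; exact hy ⟨hyA, h⟩
    have hliminf : liminf (fun n => g n y) atTop = 0 :=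
      le_antisymm (le_trans liminf_le_limsup hlim.le) zero_le
    exact tendsto_of_liminf_eq_limsup hliminf hlim
  -- product decomposition
  set p : Fin m → Prop := fun i => k ≤ (i : ℕ) with hpdef
  set E := MeasurableEquiv.piEquivPiSubtypeProd (fun _ : Fin m => K) p with hEdef
  have mpE := measurePreserving_piEquivPiSubtypeProd (fun _ : Fin m => μ) p
  set ι : Fin k ≃ {i : Fin m // ¬ p i} :=
    { toFun := fun j => ⟨Fin.castLE hkm j, not_le.mpr j.isLt⟩
      invFun := fun i => ⟨(i.1 : ℕ), not_le.mp i.2⟩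
      left_inv := fun j => by apply Fin.ext; rfl
      right_inv := fun i => by apply Subtype.ext; apply Fin.ext; rfl } with hιdef
  set G := MeasurableEquiv.piCongrLeft (fun _ : {i : Fin m // ¬ p i} => K) ι with hGdef
  have mpG := measurePreserving_piCongrLeft (fun _ : {i : Fin m // ¬ p i} => μ) ι
  have hbadE : bad = E ⁻¹' (E.symm ⁻¹' bad) := by
    ext y; simp
  have hsm : MeasurableSet (E.symm ⁻¹' bad) := E.symm.measurable hbadm
  rw [hbadE, mpE.measure_preimage hsm.nullMeasurableSet, Measure.measure_prod_null hsm]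
  refine Eventually.of_forall fun z => ?_
  show (Measure.pi fun _ : {i : Fin m // ¬ p i} => μ) (Prod.mk z ⁻¹' (E.symm ⁻¹' bad)) = 0
  have hslm : MeasurableSet (Prod.mk z ⁻¹' (E.symm ⁻¹' bad)) := measurable_prodMk_left hsm
  rw [← mpG.measure_preimage hslm.nullMeasurableSet]
  -- the slice
  set Az : Set (Fin k → K) :=
    {u : Fin k → K | (fun i : Fin m => if h : (i : ℕ) < k then u ⟨(i : ℕ), h⟩
        else z ⟨i, not_lt.mp h⟩) ∈ A} with hAzdef
  have hAzm : MeasurableSet Az := by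
    have hfm : Measurable fun u : Fin k → K => (fun i : Fin m =>
        if h : (i : ℕ) < k then u ⟨(i : ℕ), h⟩ else z ⟨i, not_lt.mp h⟩) := by
      apply measurable_pi_lambda
      intro i
      by_cases h : (i : ℕ) < k
      · simp only [dif_pos h]; exact measurable_pi_apply _
      · simp only [dif_neg h]; exact measurable_const
    exact hfm hA
  -- coordinate computations
  have hyz : ∀ (x : Fin k → K) (i : Fin m), (E.symm (z, G x)) i
      = if h : (i : ℕ) < k then x ⟨(i : ℕ), h⟩ else z ⟨i, not_lt.mp h⟩ := by
    intro x i
    have hEsymm : (E.symm (z, G x)) i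
        = if h : p i then z ⟨i, h⟩ else G x ⟨i, h⟩ := rfl
    rw [hEsymm]
    by_cases h : (i : ℕ) < k
    · rw [dif_neg (by exact not_le.mpr h : ¬ p i), dif_pos h]
      have hcoe : (⟨i, not_le.mpr h⟩ : {i : Fin m // ¬ p i}) = ι ⟨(i : ℕ), h⟩ := by
        apply Subtype.ext; apply Fin.ext; rfl
      rw [hcoe, hGdef, MeasurableEquiv.piCongrLeft_apply_apply]
    · rw [dif_pos (not_lt.mp h : p i), dif_neg h]
  have hyA : ∀ x : Fin k → K, (E.symm (z, G x) ∈ A ↔ x ∈ Az) := by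
    intro x
    have : E.symm (z, G x) = (fun i : Fin m =>
        if h : (i : ℕ) < k then x ⟨(i : ℕ), h⟩ else z ⟨i, not_lt.mp h⟩) := funext (hyz x)
    rw [this]; rfl
  have hS : ∀ (x u : Fin k → K), (F u (E.symm (z, G x)) ∈ A ↔ u ∈ Az) := by
    intro x u
    have : F u (E.symm (z, G x)) = (fun i : Fin m =>
        if h : (i : ℕ) < k then u ⟨(i : ℕ), h⟩ else z ⟨i, not_lt.mp h⟩) := by
      funext i
      by_cases h : (i : ℕ) < k
      · simp only [hFdef, dif_pos h]
      · simp only [hFdef, dif_neg h, hyz x i]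
    rw [this]; rfl
  have hptx : ∀ x : Fin k → K, pt (E.symm (z, G x)) = x := by
    intro x
    funext j
    have : (((Fin.castLE hkm j) : Fin m) : ℕ) < k := j.isLt
    simp only [hptdef, hyz x (Fin.castLE hkm j), dif_pos this]
    exact congrArg x (Fin.ext rfl)
  -- apply the density theorem on the slice
  have hcore := aux_core μ hμ1 hμs hb0 hb1 hAzm
  have h0 : ∀ᵐ x ∂ν, x ∉ G ⁻¹' (Prod.mk z ⁻¹' (E.symm ⁻¹' bad)) := by
    filter_upwards [hcore] with x hx
    intro hmem
    have hmem' : E.symm (z, G x) ∈ bad := hmem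
    obtain ⟨hyA', hlim⟩ := hmem'
    apply hlim
    have hxAz : x ∈ Az := (hyA x).mp hyA'
    have htd := hx hxAz
    have heqg : (fun n : ℕ => g n (E.symm (z, G x)))
        = fun n : ℕ => ν (Azᶜ ∩ closedBall x (‖b‖ ^ n)) / ENNReal.ofReal ((‖b‖ ^ n) ^ k) := by
      funext n
      have h1 : {u | F u (E.symm (z, G x)) ∉ A} = Azᶜ := by
        ext u
        simp only [Set.mem_setOf_eq, Set.mem_compl_iff]
        exact not_congr (hS x u)
      simp only [hgdef, h1, hptx x]
    rw [show (fun n : ℕ => g n (E.symm (z, G x))) = _ from heqg]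
    exact htd.limsup_eq
  rw [← measure_eq_zero_iff_ae_notMem] at h0
  exact h0


end Aux

lemma aux_squeeze (K : Type*) [NontriviallyNormedField K] {E : Type*}
    [SeminormedAddCommGroup E] [MeasurableSpace E] (ν : Measure E) (k : ℕ)
    {b : K} (hb0 : b ≠ 0) (hb1 : ‖b‖ < 1) (S : Set E) (x₀ : E)
    (hseq : Tendsto (fun n : ℕ => ν (S ∩ closedBall x₀ (‖b‖ ^ n)) /
        ENNReal.ofReal ((‖b‖ ^ n) ^ k)) atTop (𝓝 0)) :
    densityZeroAt K ν k S x₀ := by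
  classical
  have hb : (0 : ℝ) < ‖b‖ := norm_pos_iff.mpr hb0
  rw [densityZeroAt, ENNReal.tendsto_nhds_zero]
  intro ε hε
  set δ := ENNReal.ofReal (‖b‖ ^ k) with hδ
  have hδ0 : δ ≠ 0 := (ENNReal.ofReal_pos.mpr (by positivity)).ne'
  have hδtop : δ ≠ ∞ := ENNReal.ofReal_ne_top
  have hεδ : (0 : ℝ≥0∞) < ε * δ := ENNReal.mul_pos hε.ne' hδ0
  obtain ⟨N, hN⟩ := eventually_atTop.mp (hseq.eventually_lt_const hεδ)
  rw [eventually_nhdsWithin_iff]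
  filter_upwards [Metric.ball_mem_nhds (0 : ℝ) (by positivity : (0:ℝ) < ‖b‖ ^ N)]
    with R hR hRΓ
  obtain ⟨a, ha0, haR⟩ := hRΓ
  have hR0 : (0 : ℝ) < R := haR ▸ norm_pos_iff.mpr ha0
  have hRlt : R < ‖b‖ ^ N := by
    have := mem_ball_iff_norm.mp hR
    rwa [sub_zero, Real.norm_eq_abs, abs_of_pos hR0] at this
  have hex : ∃ m : ℕ, ‖b‖ ^ m < R :=
    ((tendsto_pow_atTop_nhds_zero_of_lt_one hb.le hb1).eventually_lt_const hR0).exists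
  set M := Nat.find hex with hM
  have hMlt : ‖b‖ ^ M < R := Nat.find_spec hex
  have hNM : N < M := by
    by_contra h
    push_neg at h
    have : ‖b‖ ^ N ≤ ‖b‖ ^ M := pow_le_pow_of_le_one hb.le hb1.le h
    linarith
  set n := M - 1 with hn
  have hnN : N ≤ n := by omega
  have hn1 : n + 1 = M := by omega
  have hRle : R ≤ ‖b‖ ^ n := by
    have := Nat.find_min hex (show n < M by omega)
    push_neg at this
    exact this
  have hlt' : ‖b‖ ^ (n + 1) < R := hn1 ▸ hMlt
  have hu0 : ENNReal.ofReal ((‖b‖ ^ n) ^ k) ≠ 0 := (ENNReal.ofReal_pos.mpr (by positivity)).ne'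
  have hutop : ENNReal.ofReal ((‖b‖ ^ n) ^ k) ≠ ∞ := ENNReal.ofReal_ne_top
  have hδ_decomp : ENNReal.ofReal ((‖b‖ ^ (n + 1)) ^ k) = ENNReal.ofReal ((‖b‖ ^ n) ^ k) * δ := by
    rw [hδ, ← ENNReal.ofReal_mul (by positivity)]
    congr 1
    ring
  have step1 : ν (S ∩ closedBall x₀ R) / ENNReal.ofReal (R ^ k)
      ≤ ν (S ∩ closedBall x₀ (‖b‖ ^ n)) / ENNReal.ofReal ((‖b‖ ^ (n + 1)) ^ k) :=
    ENNReal.div_le_div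
      (measure_mono (inter_subset_inter_right _ (closedBall_subset_closedBall hRle)))
      (ENNReal.ofReal_le_ofReal (pow_le_pow_left₀ (by positivity) hlt'.le k))
  have step2 : ν (S ∩ closedBall x₀ (‖b‖ ^ n)) / ENNReal.ofReal ((‖b‖ ^ (n + 1)) ^ k)
      = (ν (S ∩ closedBall x₀ (‖b‖ ^ n)) / ENNReal.ofReal ((‖b‖ ^ n) ^ k)) / δ := by
    rw [hδ_decomp, div_eq_mul_inv, ENNReal.mul_inv (Or.inl hu0) (Or.inl hutop), ← mul_assoc,
      ← div_eq_mul_inv, ← div_eq_mul_inv]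
  have step3 : (ν (S ∩ closedBall x₀ (‖b‖ ^ n)) / ENNReal.ofReal ((‖b‖ ^ n) ^ k)) / δ ≤ ε :=
    ENNReal.div_le_of_le_mul (hN n hnN).le
  exact le_trans (step1.trans_eq step2) step3

/-- Corollary 14. If `A ⊆ K^m` is `μ^m` measurable and
`1 ≤ k ≤ m`, then for `μ^m`-almost all `y ∈ A` the set
`{x ∈ K^k : (x₁,…,x_k, y_{k+1},…,y_m) ∉ A}` has `μ^k` density `0` at
`(y₁,…,y_k)`. -/
theorem stmt7 {K : Type*} [NontriviallyNormedField K] [IsUltrametricDist K]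
    [LocallyCompactSpace K] [MeasurableSpace K] [BorelSpace K]
    (μ : Measure K) [μ.IsAddHaarMeasure]
    (hμ1 : μ (closedBall (0 : K) 1) = 1)
    (hμs : ∀ (a : K) (A : Set K), μ (a • A) = (‖a‖₊ : ENNReal) * μ A)
    {m k : ℕ} (hk1 : 1 ≤ k) (hkm : k ≤ m)
    (A : Set (Fin m → K))
    (hA : NullMeasurableSet A (Measure.pi fun _ : Fin m => μ)) :
    ∀ᵐ y ∂((Measure.pi fun _ : Fin m => μ).restrict A),
      densityZeroAt K (Measure.pi fun _ : Fin k => μ) k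
        {x : Fin k → K |
          (fun i : Fin m => if h : (i : ℕ) < k then x ⟨(i : ℕ), h⟩ else y i) ∉ A}
        (fun j : Fin k => y (Fin.castLE hkm j)) := by
  classical
  haveI : ProperSpace K := .of_nontriviallyNormedField_of_weaklyLocallyCompactSpace K
  haveI : SigmaFinite μ := inferInstance
  set ν := Measure.pi fun _ : Fin k => μ with hνdef
  set μm := Measure.pi fun _ : Fin m => μ with hμmdef
  obtain ⟨c₀, hc₀⟩ := NormedField.exists_one_lt_norm K
  set b : K := c₀⁻¹ with hbdef
  have hb0 : b ≠ 0 := inv_ne_zero (by intro h; rw [h, norm_zero] at hc₀; linarith)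
  have hb1 : ‖b‖ < 1 := by
    rw [hbdef, norm_inv]
    rw [inv_lt_one_iff₀]
    right; exact hc₀
  obtain ⟨A', hsub, hA'm, hae⟩ := hA.exists_measurable_subset_ae_eq
  have hD0 : μm (A \ A') = 0 := by
    have h := (ae_eq_set.mp hae).2
    exact h
  set D := toMeasurable μm (A \ A') with hDdef
  have hDm : MeasurableSet D := measurableSet_toMeasurable _ _
  have hDnull : μm D = 0 := by rw [hDdef, measure_toMeasurable]; exact hD0
  have hADsub : A \ A' ⊆ D := subset_toMeasurable _ _
  have hfub := aux_fubini μ hμ1 hμs hkm A' hA'm hb0 hb1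
  have hslice := aux_nullslice μ (k := k) hkm D hDm hDnull
  rw [← Measure.restrict_congr_set hae, ae_restrict_iff' hA'm]
  filter_upwards [hfub, hslice] with y h1 h2 hyA'
  apply aux_squeeze K ν k hb0 hb1
  have hseq' := h1 hyA'
  have hkey : ∀ B : Set (Fin k → K),
      ν ({x : Fin k → K |
          (fun i : Fin m => if h : (i : ℕ) < k then x ⟨(i : ℕ), h⟩ else y i) ∉ A} ∩ B)
      = ν ({x : Fin k → K |
          (fun i : Fin m => if h : (i : ℕ) < k then x ⟨(i : ℕ), h⟩ else y i) ∉ A'} ∩ B) := by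
    intro B
    apply le_antisymm
    · refine measure_mono (inter_subset_inter_left _ ?_)
      intro x hx hx'
      exact hx (hsub hx')
    · calc ν ({x : Fin k → K |
            (fun i : Fin m => if h : (i : ℕ) < k then x ⟨(i : ℕ), h⟩ else y i) ∉ A'} ∩ B)
          ≤ ν (({x : Fin k → K |
            (fun i : Fin m => if h : (i : ℕ) < k then x ⟨(i : ℕ), h⟩ else y i) ∉ A} ∩ B)
            ∪ {u : Fin k → K |
              (fun i : Fin m => if h : (i : ℕ) < k then u ⟨(i : ℕ), h⟩ else y i) ∈ D}) := by
            apply measure_mono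
            intro x hx
            by_cases hmem : (fun i : Fin m =>
                if h : (i : ℕ) < k then x ⟨(i : ℕ), h⟩ else y i) ∈ A
            · exact Or.inr (hADsub ⟨hmem, hx.1⟩)
            · exact Or.inl ⟨hmem, hx.2⟩
        _ ≤ ν ({x : Fin k → K |
            (fun i : Fin m => if h : (i : ℕ) < k then x ⟨(i : ℕ), h⟩ else y i) ∉ A} ∩ B)
            + ν {u : Fin k → K |
              (fun i : Fin m => if h : (i : ℕ) < k then u ⟨(i : ℕ), h⟩ else y i) ∈ D} :=
            measure_union_le _ _
        _ = ν ({x : Fin k → K |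
            (fun i : Fin m => if h : (i : ℕ) < k then x ⟨(i : ℕ), h⟩ else y i) ∉ A} ∩ B) := by
            rw [h2, add_zero]
  have heq : (fun n : ℕ => ν ({x : Fin k → K |
        (fun i : Fin m => if h : (i : ℕ) < k then x ⟨(i : ℕ), h⟩ else y i) ∉ A}
        ∩ closedBall (fun j : Fin k => y (Fin.castLE hkm j)) (‖b‖ ^ n)) /
        ENNReal.ofReal ((‖b‖ ^ n) ^ k))
      = (fun n : ℕ => ν ({x : Fin k → K |
        (fun i : Fin m => if h : (i : ℕ) < k then x ⟨(i : ℕ), h⟩ else y i) ∉ A'}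
        ∩ closedBall (fun j : Fin k => y (Fin.castLE hkm j)) (‖b‖ ^ n)) /
        ENNReal.ofReal ((‖b‖ ^ n) ^ k)) := by
    funext n; rw [hkey]
  rw [heq]
  exact hseq'
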